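/- Let (A, Φ, φ) be a C*-dynamical system with φ a faithful state, and Ψ : A → A a unital completely positive map with Φ(Ψ(a)) = a for all a ∈ A. Then Ψ is a *-homomorphism: Ψ(ab) = Ψ(a)Ψ(b) and Ψ(a*) = Ψ(a)* for all a, b ∈ A. -/

import Mathlib

open scoped ComplexOrder

/-- Complete positivity of a linear map between star-ordered `ℂ`-algebras. -/
def IsCompletelyPositive {A B : Type*} [Ring A] [StarRing A] [Algebra ℂ A]
    [Ring B] [StarRing B] [PartialOrder B] [Algebra ℂ B]
    (Φ : A →ₗ[ℂ] B) : Prop :=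
  ∀ (n : ℕ) (a : Fin n → A) (c : Fin n → B),
    0 ≤ ∑ i : Fin n, ∑ j : Fin n, star (c i) * Φ (star (a i) * a j) * c j

open scoped ComplexStarModule

section Aux

variable {A : Type*} [NormedRing A] [StarRing A] [CStarRing A]
    [PartialOrder A] [StarOrderedRing A] [NormedAlgebra ℂ A] [StarModule ℂ A]
    [CompleteSpace A]

/-- Assemble the bundled `CStarAlgebra` class from its components, so that the
continuous functional calculus instances become available. -/
noncomputable local instance auxCStarAlgebra : CStarAlgebra A :=
  { ‹NormedRing A›, ‹StarRing A›, ‹CStarRing A›, ‹NormedAlgebra ℂ A›,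
    ‹StarModule ℂ A›, ‹CompleteSpace A› with }

lemma aux_smsa (Θ : A →ₗ[ℂ] A) (hcp : IsCompletelyPositive Θ) (a : A) :
    0 ≤ Θ (star a * a) := by
  have h := hcp 1 ![a] ![1]
  simpa using h

lemma aux_nonneg (Θ : A →ₗ[ℂ] A) (hcp : IsCompletelyPositive Θ) {p : A} (hp : 0 ≤ p) :
    0 ≤ Θ p := by
  have h := aux_smsa Θ hcp (CFC.sqrt p)
  rwa [(IsSelfAdjoint.of_nonneg (CFC.sqrt_nonneg p)).star_eq, CFC.sqrt_mul_sqrt_self p hp] at h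

lemma aux_sa (Θ : A →ₗ[ℂ] A) (hcp : IsCompletelyPositive Θ) {x : A} (hx : IsSelfAdjoint x) :
    IsSelfAdjoint (Θ x) := by
  rw [← CFC.posPart_sub_negPart x hx, map_sub]
  exact (IsSelfAdjoint.of_nonneg (aux_nonneg Θ hcp (CFC.posPart_nonneg x))).sub
    (IsSelfAdjoint.of_nonneg (aux_nonneg Θ hcp (CFC.negPart_nonneg x)))

lemma aux_star (Θ : A →ₗ[ℂ] A) (hcp : IsCompletelyPositive Θ) (a : A) :
    Θ (star a) = star (Θ a) := by
  have hxsa : IsSelfAdjoint ((ℜ a : A)) := (ℜ a).2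
  have hysa : IsSelfAdjoint ((ℑ a : A)) := (ℑ a).2
  have hx : IsSelfAdjoint (Θ (ℜ a : A)) := aux_sa Θ hcp hxsa
  have hy : IsSelfAdjoint (Θ (ℑ a : A)) := aux_sa Θ hcp hysa
  conv_lhs => rw [← realPart_add_I_smul_imaginaryPart a]
  conv_rhs => rw [← realPart_add_I_smul_imaginaryPart a]
  rw [star_add, star_smul, hxsa.star_eq, hysa.star_eq, map_add, map_smul,
    map_add, map_smul, star_add, star_smul, hx.star_eq, hy.star_eq]

lemma aux_ks (Θ : A →ₗ[ℂ] A) (hcp : IsCompletelyPositive Θ) (h1 : Θ 1 = 1) (a : A) :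
    star (Θ a) * Θ a ≤ Θ (star a * a) := by
  have h := hcp 2 ![1, a] ![-(Θ a), 1]
  simp only [Fin.sum_univ_two, Matrix.cons_val_zero, Matrix.cons_val_one, Matrix.head_cons,
    star_one, star_neg, one_mul, mul_one, h1, neg_mul, mul_neg, neg_neg] at h
  rw [aux_star Θ hcp] at h
  have heq : star (Θ a) * Θ a + -(star (Θ a) * Θ a) +
      (-(star (Θ a) * Θ a) + Θ (star a * a)) = Θ (star a * a) - star (Θ a) * Θ a := by
    abel
  rw [heq] at h
  exact sub_nonneg.mp h

end Aux

/-- if `(A, Φ, φ)` is a C*-dynamical system with `φ` a faithful state and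
`Ψ` is a unital completely positive right inverse of `Φ`, then `Ψ` is a *-homomorphism:
`Ψ(ab) = Ψ(a)Ψ(b)` and `Ψ(a*) = Ψ(a)*`. -/
theorem statement12 {A : Type*} [NormedRing A] [StarRing A] [CStarRing A]
    [PartialOrder A] [StarOrderedRing A] [NormedAlgebra ℂ A] [StarModule ℂ A]
    [CompleteSpace A]
    (φ : A →ₗ[ℂ] ℂ) (hφ1 : φ 1 = 1) (hφpos : ∀ a : A, 0 ≤ φ (star a * a))
    (hφfaithful : ∀ a : A, φ (star a * a) = 0 → a = 0)
    (Φ : A →ₗ[ℂ] A) (hΦ1 : Φ 1 = 1) (hΦcp : IsCompletelyPositive Φ)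
    (hinv : ∀ a, φ (Φ a) = φ a)
    (Ψ : A →ₗ[ℂ] A) (hΨ1 : Ψ 1 = 1) (hΨcp : IsCompletelyPositive Ψ)
    (hΦΨ : ∀ a : A, Φ (Ψ a) = a) :
    (∀ a b : A, Ψ (a * b) = Ψ a * Ψ b) ∧ ∀ a : A, Ψ (star a) = star (Ψ a) := by
  letI : CStarAlgebra A := auxCStarAlgebra
  have hΨstar : ∀ a : A, Ψ (star a) = star (Ψ a) := aux_star Ψ hΨcp
  -- equality in Kadison–Schwarz for Ψ
  have hmul_sa : ∀ a : A, Ψ (star a * a) = star (Ψ a) * Ψ a := by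
    intro a
    have hx : 0 ≤ Ψ (star a * a) - star (Ψ a) * Ψ a :=
      sub_nonneg.mpr (aux_ks Ψ hΨcp hΨ1 a)
    set x := Ψ (star a * a) - star (Ψ a) * Ψ a with hxdef
    have hΦx_le : Φ x ≤ 0 := by
      have h2 := aux_ks Φ hΦcp hΦ1 (Ψ a)
      rw [hΦΨ] at h2
      have hh : Φ x = star a * a - Φ (star (Ψ a) * Ψ a) := by
        rw [hxdef, map_sub, hΦΨ]
      rw [hh]
      exact sub_nonpos.mpr h2
    have hΦx : Φ x = 0 := le_antisymm hΦx_le (aux_nonneg Φ hΦcp hx)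
    have hφx : φ x = 0 := by rw [← hinv x, hΦx, map_zero]
    have hs : φ (star (CFC.sqrt x) * CFC.sqrt x) = 0 := by
      rw [(IsSelfAdjoint.of_nonneg (CFC.sqrt_nonneg x)).star_eq, CFC.sqrt_mul_sqrt_self x hx, hφx]
    have hsq := hφfaithful _ hs
    have hx0 : x = 0 := by
      calc x = CFC.sqrt x * CFC.sqrt x := (CFC.sqrt_mul_sqrt_self x hx).symm
      _ = 0 := by rw [hsq, mul_zero]
    exact sub_eq_zero.mp hx0
  -- polarization
  have key : ∀ a b : A, Ψ (star a * b) = star (Ψ a) * Ψ b := by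
    intro a b
    set g : A → A := fun c => Ψ (star c * c) - star (Ψ c) * Ψ c with hgdef
    have hg : ∀ c, g c = 0 := fun c => sub_eq_zero.mpr (hmul_sa c)
    set p := Ψ (star a * b) with hp
    set q := Ψ (star b * a) with hq
    set r := star (Ψ a) * Ψ b with hr
    set s := star (Ψ b) * Ψ a with hs
    have h₁ : p + q = r + s := by
      have he : p + q - (r + s) = g (a + b) - g a - g b := by
        simp only [hgdef, hp, hq, hr, hs, star_add, add_mul, mul_add, map_add]
        abel
      rw [hg, hg, hg] at he
      have : p + q - (r + s) = 0 := by rw [he]; abel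
      exact sub_eq_zero.mp this
    have h₂ : p - q = r - s := by
      have he : Complex.I • (p - q - (r - s)) = g (a + Complex.I • b) - g a - g b := by
        simp only [hgdef, hp, hq, hr, hs, star_add, star_smul, add_mul, mul_add,
          map_add, map_smul, smul_mul_assoc, mul_smul_comm, smul_smul, map_neg,
          Complex.star_def, Complex.conj_I, neg_mul, neg_smul, smul_sub, smul_add, Complex.I_mul_I,
          neg_neg, one_smul]
        match_scalars <;> simp
      rw [hg, hg, hg] at he
      have hz : Complex.I • (p - q - (r - s)) = 0 := by rw [he]; abel
      have := (smul_eq_zero.mp hz).resolve_left Complex.I_ne_zero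
      exact sub_eq_zero.mp this
    have h3 : (2 : ℂ) • p = (2 : ℂ) • r := by
      rw [two_smul, two_smul]
      calc p + p = (p + q) + (p - q) := by abel
      _ = (r + s) + (r - s) := by rw [h₁, h₂]
      _ = r + r := by abel
    exact smul_right_injective A two_ne_zero h3
  refine ⟨fun a b => ?_, hΨstar⟩
  calc Ψ (a * b) = Ψ (star (star a) * b) := by rw [star_star]
  _ = star (Ψ (star a)) * Ψ b := key (star a) b
  _ = Ψ a * Ψ b := by rw [hΨstar, star_star]
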